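/- Let D ⊂ ℂ be a domain, let φ_j : D → D be a sequence of continuous maps converging locally uniformly to the constant map with value p ∈ ∂D, and let U be an open neighbourhood of p such that U ∩ D is simply connected. Then every loop γ in D is null-homotopic in D; i.e., D is simply connected. -/
import Mathlib

open Set

/-- Homotopy of paths is preserved by casting endpoints along equalities. -/
lemma homotopic_cast {X : Type*} [TopologicalSpace X] {x y x' y' : X}
    (hx : x' = x) (hy : y' = y) {p q : Path x y} (h : p.Homotopic q) :
    (p.cast hx hy).Homotopic (q.cast hx hy) := by
  subst hx; subst hy
  have hp : p.cast rfl rfl = p := by ext t; rfl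
  have hq : q.cast rfl rfl = q := by ext t; rfl
  rw [hp, hq]; exact h

/-- If a domain `D ⊂ ℂ` admits self-homeomorphisms `φ_j` converging locally uniformly to a
constant boundary value `p`, and `p` has a neighbourhood `U` with `U ∩ D` simply connected,
then `D` is simply connected. -/
theorem simplyConnected_of_orbit_to_collared_point
    (D : Set ℂ) (hD : IsOpen D) (hDconn : IsConnected D)
    (p : ℂ) (hp : p ∈ frontier D)
    (φ : ℕ → ℂ → ℂ)
    (hφcont : ∀ j, ContinuousOn (φ j) D)
    (hφmaps : ∀ j, MapsTo (φ j) D D)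
    (hφhomeo : ∀ j, ∃ e : D ≃ₜ D, ∀ x : D, (e x : ℂ) = φ j x)
    (hconv : TendstoLocallyUniformlyOn φ (fun _ => p) Filter.atTop D)
    (U : Set ℂ) (hU : IsOpen U) (hpU : p ∈ U)
    (hUD : SimplyConnectedSpace (U ∩ D : Set ℂ)) :
    SimplyConnectedSpace D := by
  haveI := hUD
  rw [simply_connected_iff_paths_homotopic']
  constructor
  · exact isPathConnected_iff_pathConnectedSpace.mp
      (hD.isConnected_iff_isPathConnected.mp hDconn)
  · intro x y γ₀ γ₁
    -- the compact set swept by the two paths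
    set K : Set ℂ := Subtype.val '' (range γ₀ ∪ range γ₁) with hK
    have hKc : IsCompact K := ((isCompact_range γ₀.continuous).union
      (isCompact_range γ₁.continuous)).image continuous_subtype_val
    have hKD : K ⊆ D := by rintro z ⟨w, -, rfl⟩; exact w.2
    -- uniform convergence on K
    have hUnif : TendstoUniformlyOn φ (fun _ => p) Filter.atTop K :=
      (tendstoLocallyUniformlyOn_iff_forall_isCompact hD).mp hconv K hKD hKc
    obtain ⟨ε, hε, hball⟩ := Metric.isOpen_iff.mp hU p hpU
    have hEv := (Metric.tendstoUniformlyOn_iff.mp hUnif) ε hε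
    obtain ⟨j, hj⟩ := hEv.exists
    obtain ⟨e, he⟩ := hφhomeo j
    -- the images of the paths under e lie in U
    have hmem : ∀ w : D, (w : ℂ) ∈ K → ((e w : ℂ) ∈ U ∧ (e w : ℂ) ∈ D) := by
      intro w hw
      refine ⟨hball ?_, (e w).2⟩
      rw [Metric.mem_ball, he w, dist_comm]
      exact hj _ hw
    have hmem₀ : ∀ t, ((e (γ₀ t) : ℂ)) ∈ U ∩ D := fun t =>
      hmem _ ⟨γ₀ t, Or.inl ⟨t, rfl⟩, rfl⟩
    have hmem₁ : ∀ t, ((e (γ₁ t) : ℂ)) ∈ U ∩ D := fun t =>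
      hmem _ ⟨γ₁ t, Or.inr ⟨t, rfl⟩, rfl⟩
    -- lift the transported paths to U ∩ D
    let lift : ∀ (γ : Path x y) (hγ : ∀ t, ((e (γ t) : ℂ)) ∈ U ∩ D),
        Path (⟨(e x : ℂ), γ.source ▸ hγ 0⟩ : (U ∩ D : Set ℂ)) ⟨(e y : ℂ), γ.target ▸ hγ 1⟩ :=
      fun γ hγ =>
      { toFun := fun t => ⟨(e (γ t) : ℂ), hγ t⟩
        continuous_toFun := by
          exact Continuous.subtype_mk
            (continuous_subtype_val.comp (e.continuous.comp γ.continuous)) _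
        source' := by apply Subtype.ext; simp
        target' := by apply Subtype.ext; simp }
    -- the lifted paths are homotopic in U ∩ D (simply connected)
    have hhom : (lift γ₀ hmem₀).Homotopic (lift γ₁ hmem₁) :=
      SimplyConnectedSpace.paths_homotopic _ _
    -- push forward along the inclusion into D
    have hι : Continuous (fun z : (U ∩ D : Set ℂ) => (⟨(z : ℂ), z.2.2⟩ : D)) :=
      Continuous.subtype_mk continuous_subtype_val _
    have hhomD := Path.Homotopic.map hhom ⟨_, hι⟩
    -- identify the pushed-forward paths with `γᵢ.map e.continuous`
    have hid₀ : ((lift γ₀ hmem₀).map hι) = γ₀.map e.continuous := by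
      ext t; rfl
    have hid₁ : ((lift γ₁ hmem₁).map hι) = γ₁.map e.continuous := by
      ext t; rfl
    rw [hid₀, hid₁] at hhomD
    -- pull back along e.symm
    have hhomD' := Path.Homotopic.map hhomD ⟨_, e.symm.continuous⟩
    have hfin₀ : γ₀ = ((γ₀.map e.continuous).map e.symm.continuous).cast
        (e.symm_apply_apply x).symm (e.symm_apply_apply y).symm := by
      ext t; simp [Path.cast, Path.map, Path.map']
    have hfin₁ : γ₁ = ((γ₁.map e.continuous).map e.symm.continuous).cast
        (e.symm_apply_apply x).symm (e.symm_apply_apply y).symm := by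
      ext t; simp [Path.cast, Path.map, Path.map']
    rw [hfin₀, hfin₁]
    exact homotopic_cast _ _ hhomD'
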